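/- For every integer m ≥ 1: ∫₀¹ ln^m(1−x)/(1+x) dx = (−1)^m · m! · Li_{m+1}(1/2). -/

import Mathlib

open Real Filter

/-- Generalized harmonic number `H_n^(m) = ∑_{j=1}^n 1/j^m`. -/
noncomputable def H (m n : ℕ) : ℝ := ∑ j ∈ Finset.range n, 1 / ((j : ℝ) + 1) ^ m

/-- Riemann zeta value `ζ(r) = ∑_{n=1}^∞ 1/n^r`. -/
noncomputable def zt (r : ℕ) : ℝ := ∑' n : ℕ, 1 / ((n : ℝ) + 1) ^ r

/-- Polylogarithm `Li_p(x)`, with `Li_1(x) = -log(1-x)`. -/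
noncomputable def Li (p : ℕ) (x : ℝ) : ℝ :=
  if p = 1 then -Real.log (1 - x) else ∑' n : ℕ, x ^ (n + 1) / ((n : ℝ) + 1) ^ p

section helpers
open MeasureTheory Set


lemma image_exp_neg : (fun t : ℝ => Real.exp (-t)) '' (Set.Ioi 0) = Set.Ioo 0 1 := by
  ext u
  constructor
  · rintro ⟨t, ht, rfl⟩
    refine ⟨Real.exp_pos _, Real.exp_lt_one_iff.2 (by simpa using ht)⟩
  · rintro ⟨h0, h1⟩
    exact ⟨-Real.log u, by simpa using Real.log_neg h0 h1, by simp [Real.exp_log h0]⟩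

lemma subst_eq (g : ℝ → ℝ) :
    ∫ u in Set.Ioo (0:ℝ) 1, g u = ∫ t in Set.Ioi (0:ℝ), Real.exp (-t) * g (Real.exp (-t)) := by
  rw [← image_exp_neg]
  rw [integral_image_eq_integral_abs_deriv_smul (f := fun t => Real.exp (-t))
    (f' := fun t => -Real.exp (-t)) measurableSet_Ioi
    (fun t _ => (((Real.hasDerivAt_exp (-t)).comp t (hasDerivAt_neg t)).congr_deriv (by ring)).hasDerivWithinAt)
    (fun a _ b _ h => by simpa using Real.exp_injective h) g]
  refine setIntegral_congr_fun measurableSet_Ioi fun t _ => ?_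
  rw [abs_of_nonpos (by simp [(Real.exp_pos (-t)).le])]
  simp [mul_comm]

lemma subst_iff (g : ℝ → ℝ) :
    IntegrableOn g (Set.Ioo (0:ℝ) 1) ↔
      IntegrableOn (fun t => Real.exp (-t) * g (Real.exp (-t))) (Set.Ioi (0:ℝ)) := by
  rw [← image_exp_neg]
  rw [integrableOn_image_iff_integrableOn_abs_deriv_smul (f := fun t => Real.exp (-t))
    (f' := fun t => -Real.exp (-t)) measurableSet_Ioi
    (fun t _ => (((Real.hasDerivAt_exp (-t)).comp t (hasDerivAt_neg t)).congr_deriv (by ring)).hasDerivWithinAt)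
    (fun a _ b _ h => by simpa using Real.exp_injective h) g]
  refine integrableOn_congr_fun (fun t _ => ?_) measurableSet_Ioi
  rw [abs_of_nonpos (by simp [(Real.exp_pos (-t)).le])]
  simp [mul_comm]

lemma gamma_form (n m : ℕ) : ∀ t ∈ Set.Ioi (0:ℝ),
    Real.exp (-t) * ((Real.exp (-t))^n * (-Real.log (Real.exp (-t)))^m)
      = t ^ ((m:ℝ) + 1 - 1) * Real.exp (-(((n:ℝ)+1) * t)) := by
  intro t ht
  rw [Real.log_exp]
  rw [show ((m:ℝ) + 1 - 1) = (m:ℝ) by ring, Real.rpow_natCast]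
  rw [← Real.exp_nat_mul]
  rw [show rexp (-t) * (rexp (↑n * -t) * (- -t) ^ m) = rexp (-t + ↑n * -t) * t ^ m by
    rw [Real.exp_add]; ring]
  rw [show (-t + ↑n * -t) = -(((n:ℝ)+1) * t) by ring, mul_comm]

lemma keyint (n m : ℕ) :
    ∫ u in Set.Ioo (0:ℝ) 1, u^n * (-Real.log u)^m
      = (m.factorial : ℝ) / ((n:ℝ)+1)^(m+1) := by
  rw [subst_eq (fun u => u^n * (-Real.log u)^m)]
  rw [setIntegral_congr_fun measurableSet_Ioi (gamma_form n m)]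
  rw [integral_rpow_mul_exp_neg_mul_Ioi (by positivity) (by positivity)]
  rw [show ((m:ℝ) + 1) = ((m+1 : ℕ) : ℝ) by push_cast; ring]
  rw [Real.rpow_natCast, show ((m+1 : ℕ) : ℝ) = (m:ℝ)+1 by push_cast; ring,
    Real.Gamma_nat_eq_factorial]
  rw [div_pow, one_pow]
  ring

lemma keyintegrable (n m : ℕ) :
    IntegrableOn (fun u => u^n * (-Real.log u)^m) (Set.Ioo (0:ℝ) 1) := by
  rw [subst_iff]
  rw [integrableOn_congr_fun (gamma_form n m) measurableSet_Ioi]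
  have := integrableOn_rpow_mul_exp_neg_mul_rpow (p := 1) (s := (m:ℝ)+1-1) (b := (n:ℝ)+1)
    (by simp; linarith [Nat.cast_nonneg (α:=ℝ) m]) one_pos (by positivity)
  refine this.congr_fun (fun t ht => ?_) measurableSet_Ioi
  beta_reduce
  rw [Real.rpow_one, neg_mul]

lemma summable_aux (m : ℕ) :
    Summable (fun n : ℕ => (1/2:ℝ)^(n+1) * ((m.factorial : ℝ) / ((n:ℝ)+1)^(m+1))) := by
  have hgeo : Summable (fun n : ℕ => (1/2:ℝ)^n) :=
    summable_geometric_of_lt_one (by norm_num) (by norm_num)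
  have hg : Summable (fun n : ℕ => (m.factorial : ℝ) * (1/2:ℝ)^(n+1)) :=
    (hgeo.mul_left ((m.factorial : ℝ) * (1/2))).congr (fun n => by rw [pow_succ]; ring)
  apply Summable.of_nonneg_of_le (fun n => by positivity) _ hg
  intro n
  have h1 : ((m.factorial : ℝ) / ((n:ℝ)+1)^(m+1)) ≤ (m.factorial : ℝ) := by
    apply div_le_self (by positivity)
    apply one_le_pow₀
    linarith [Nat.cast_nonneg (α:=ℝ) n]
  calc (1/2:ℝ)^(n+1) * ((m.factorial : ℝ) / ((n:ℝ)+1)^(m+1))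
      ≤ (1/2:ℝ)^(n+1) * (m.factorial : ℝ) :=
        mul_le_mul_of_nonneg_left h1 (by positivity)
    _ = (m.factorial : ℝ) * (1/2:ℝ)^(n+1) := by ring

lemma tsum_part (m : ℕ) :
    ∫ u in Set.Ioo (0:ℝ) 1, (-Real.log u)^m / (2 - u)
      = ∑' n : ℕ, (1/2:ℝ)^(n+1) * ((m.factorial : ℝ) / ((n:ℝ)+1)^(m+1)) := by
  have hmeas : ∀ n : ℕ, AEStronglyMeasurable
      (fun u : ℝ => (1/2:ℝ)^(n+1) * (u^n * (-Real.log u)^m))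
      (volume.restrict (Set.Ioo (0:ℝ) 1)) := by
    intro n
    exact (((measurable_id.pow_const n).mul
      ((Real.measurable_log.neg).pow_const m)).const_mul _).aestronglyMeasurable
  have hpt : ∀ u ∈ Set.Ioo (0:ℝ) 1,
      (∑' n : ℕ, (1/2:ℝ)^(n+1) * (u^n * (-Real.log u)^m)) = (-Real.log u)^m / (2 - u) := by
    intro u hu
    have h2 : u / 2 < 1 := by linarith [hu.2]
    have h0 : (0:ℝ) ≤ u / 2 := by linarith [hu.1]
    have hgeo : ∑' n : ℕ, (1/2:ℝ)^(n+1) * u^n = 1 / (2 - u) := by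
      have := tsum_geometric_of_lt_one h0 h2
      have h := this
      calc ∑' n : ℕ, (1/2:ℝ)^(n+1) * u^n = ∑' n : ℕ, (1/2) * (u/2)^n := by
            congr 1; funext n; rw [pow_succ, div_pow, div_pow]; ring
        _ = (1/2) * (1 - u/2)⁻¹ := by rw [tsum_mul_left, h]
        _ = 1 / (2 - u) := by
              rw [eq_div_iff (by linarith [hu.2] : (2:ℝ) - u ≠ 0), inv_eq_one_div]
              have hne : (1:ℝ) - u/2 ≠ 0 := by linarith [hu.2]
              rw [show (1:ℝ)/2*(1/(1-u/2))*(2-u) = (1-u/2)⁻¹*(1-u/2) by rw [one_div]; ring,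
                inv_mul_cancel₀ hne]
    calc (∑' n : ℕ, (1/2:ℝ)^(n+1) * (u^n * (-Real.log u)^m))
        = (∑' n : ℕ, (1/2:ℝ)^(n+1) * u^n) * (-Real.log u)^m := by
          rw [← tsum_mul_right]
          exact tsum_congr fun n => by ring
      _ = (-Real.log u)^m / (2 - u) := by rw [hgeo]; ring
  have hnn : ∀ n : ℕ, ∀ u ∈ Set.Ioo (0:ℝ) 1,
      0 ≤ (1/2:ℝ)^(n+1) * (u^n * (-Real.log u)^m) := by
    intro n u hu
    have : Real.log u ≤ 0 := Real.log_nonpos hu.1.le hu.2.le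
    have h1 : (0:ℝ) ≤ -Real.log u := by linarith
    have h2 : (0:ℝ) ≤ u := hu.1.le
    positivity
  have hint : ∀ n : ℕ, IntegrableOn
      (fun u : ℝ => (1/2:ℝ)^(n+1) * (u^n * (-Real.log u)^m)) (Set.Ioo (0:ℝ) 1) :=
    fun n => (keyintegrable n m).const_mul _
  have hival : ∀ n : ℕ, ∫ u in Set.Ioo (0:ℝ) 1, (1/2:ℝ)^(n+1) * (u^n * (-Real.log u)^m)
      = (1/2:ℝ)^(n+1) * ((m.factorial : ℝ) / ((n:ℝ)+1)^(m+1)) := by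
    intro n
    rw [MeasureTheory.integral_const_mul, keyint n m]
  rw [← setIntegral_congr_fun measurableSet_Ioo hpt]
  rw [MeasureTheory.integral_tsum hmeas ?_]
  · exact tsum_congr hival
  · have hlin : ∀ n : ℕ, ∫⁻ u in Set.Ioo (0:ℝ) 1,
        ‖(1/2:ℝ)^(n+1) * (u^n * (-Real.log u)^m)‖ₑ
        = ENNReal.ofReal ((1/2:ℝ)^(n+1) * ((m.factorial : ℝ) / ((n:ℝ)+1)^(m+1))) := by
      intro n
      rw [← hival n]
      rw [show (∫⁻ u in Set.Ioo (0:ℝ) 1, ‖(1/2:ℝ)^(n+1) * (u^n * (-Real.log u)^m)‖ₑ)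
          = ∫⁻ u in Set.Ioo (0:ℝ) 1,
              ENNReal.ofReal ((1/2:ℝ)^(n+1) * (u^n * (-Real.log u)^m)) from
        lintegral_congr_ae (by
          filter_upwards [(ae_restrict_iff' measurableSet_Ioo).2 (.of_forall (hnn n))] with u hu
          rw [← Real.enorm_eq_ofReal hu])]
      exact (ofReal_integral_eq_lintegral_ofReal (hint n)
        ((ae_restrict_iff' measurableSet_Ioo).2 (.of_forall (hnn n)))).symm
    simp_rw [hlin]
    rw [← ENNReal.ofReal_tsum_of_nonneg (fun n => by positivity) (summable_aux m)]
    exact ENNReal.ofReal_ne_top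


theorem stmt12'' (m : ℕ) (hm : 1 ≤ m) :
    ∫ x in (0 : ℝ)..1, (Real.log (1 - x)) ^ m / (1 + x)
      = (-1 : ℝ) ^ m * (m.factorial : ℝ) * ((∑' n : ℕ, (1/2:ℝ) ^ (n + 1) / ((n : ℝ) + 1) ^ (m+1))) := by
  have step1 : (∫ x in (0:ℝ)..1, (Real.log (1 - x)) ^ m / (1 + x))
      = ∫ u in (0:ℝ)..1, (Real.log u) ^ m / (2 - u) := by
    have h := intervalIntegral.integral_comp_sub_left (a := 0) (b := 1)
      (fun u => (Real.log u)^m / (2 - u)) 1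
    simp only [sub_zero, sub_self] at h
    rw [← h]
    refine intervalIntegral.integral_congr fun x _ => ?_
    show (Real.log (1-x))^m / (1+x) = (Real.log (1-x))^m / (2 - (1-x))
    congr 1
    ring
  rw [step1, intervalIntegral.integral_of_le (by norm_num : (0:ℝ) ≤ 1),
    MeasureTheory.integral_Ioc_eq_integral_Ioo]
  have step2 : (∫ u in Set.Ioo (0:ℝ) 1, (Real.log u) ^ m / (2 - u))
      = (-1:ℝ)^m * ∫ u in Set.Ioo (0:ℝ) 1, (-Real.log u) ^ m / (2 - u) := by
    rw [← MeasureTheory.integral_const_mul]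
    refine setIntegral_congr_fun measurableSet_Ioo fun u _ => ?_
    rw [show Real.log u = -(-Real.log u) by ring, neg_pow]
    ring
  rw [step2, tsum_part m]
  rw [show (∑' n : ℕ, (1/2:ℝ)^(n+1) * ((m.factorial : ℝ) / ((n:ℝ)+1)^(m+1)))
      = (m.factorial : ℝ) * ∑' n : ℕ, (1/2:ℝ)^(n+1) / ((n:ℝ)+1)^(m+1) by
    rw [← tsum_mul_left]
    exact tsum_congr fun n => by ring]
  ring

end helpers

theorem stmt12 (m : ℕ) (hm : 1 ≤ m) :
    ∫ x in (0 : ℝ)..1, (Real.log (1 - x)) ^ m / (1 + x)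
      = (-1 : ℝ) ^ m * (m.factorial : ℝ) * Li (m + 1) (1/2) := by
  have hLi : Li (m + 1) (1/2)
      = ∑' n : ℕ, (1/2:ℝ) ^ (n + 1) / ((n : ℝ) + 1) ^ (m+1) := by
    simp only [Li, if_neg (by omega : ¬ m + 1 = 1)]
  rw [hLi]
  exact stmt12'' m hm
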